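/- Let (K,τ) be a totally disconnected compact abelian group and ψ: (K,τ) → (K,τ) a continuous endomorphism. Then ent*_τ(ψ) = h_top(ψ), i.e., the topological adjoint entropy of ψ equals its topological entropy. -/

import Mathlib

open Filter Topology ENNReal

variable {G : Type*} [AddCommGroup G]

/-- `B_n(φ,N) = N ∩ φ⁻¹(N) ∩ … ∩ φ^{-(n-1)}(N)`. -/
noncomputable def Bsub (φ : AddMonoid.End G) (N : AddSubgroup G) (n : ℕ) : AddSubgroup G :=
  ⨅ i ∈ Finset.range n, N.comap (φ ^ i : AddMonoid.End G)

/-- `H*(φ,N) = lim_n log|G/B_n(φ,N)|/n`. -/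
noncomputable def Hstar (φ : AddMonoid.End G) (N : AddSubgroup G) : ℝ :=
  limUnder atTop fun n : ℕ => Real.log ((Bsub φ N n).index) / n

/-- The topological adjoint entropy: sup of `H*(φ,N)` over `τ`-open finite-index subgroups. -/
noncomputable def entStar (t : TopologicalSpace G) (φ : AddMonoid.End G) : ℝ≥0∞ :=
  ⨆ (N : AddSubgroup G) (_ : @IsOpen G t ↑N ∧ N.FiniteIndex), ENNReal.ofReal (Hstar φ N)

/-- Minimal cardinality of a finite subcover of `U`. -/
noncomputable def covN {X : Type*} [TopologicalSpace X] (U : Set (Set X)) : ℕ :=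
  sInf {n : ℕ | ∃ F : Finset (Set X), ↑F ⊆ U ∧ ⋃₀ (F : Set (Set X)) = Set.univ ∧ F.card = n}

/-- `covTraj ψ U n = U ∨ ψ⁻¹U ∨ … ∨ ψ⁻ⁿU`. -/
def covTraj {X : Type*} (ψ : X → X) (U : Set (Set X)) : ℕ → Set (Set X)
  | 0 => U
  | n + 1 => Set.image2 (· ∩ ·) U ((fun s => ψ ⁻¹' s) '' covTraj ψ U n)

/-- Topological entropy of `ψ` with respect to the cover `U`. -/
noncomputable def Htop {X : Type*} [TopologicalSpace X] (ψ : X → X) (U : Set (Set X)) : ℝ :=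
  limUnder atTop fun n : ℕ => Real.log (covN (covTraj ψ U n)) / (n + 1)

/-- The Adler–Konheim–McAndrew topological entropy. -/
noncomputable def htop {X : Type*} [TopologicalSpace X] (ψ : X → X) : ℝ≥0∞ :=
  ⨆ (U : Set (Set X)) (_ : (∀ s ∈ U, IsOpen s) ∧ ⋃₀ U = Set.univ),
    ENNReal.ofReal (Htop ψ U)



set_option linter.unusedSectionVars false
section Cov
variable {X : Type*} [TopologicalSpace X] {U V : Set (Set X)}

/-- A finite subcover witnesses an upper bound on `covN`. -/
lemma covN_le {F : Finset (Set X)} (h1 : ↑F ⊆ U) (h2 : ⋃₀ (F : Set (Set X)) = Set.univ) :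
    covN U ≤ F.card := Nat.sInf_le ⟨F, h1, h2, rfl⟩

/-- `covN` is attained when some finite subcover exists. -/
lemma covN_spec (h : ∃ F : Finset (Set X), ↑F ⊆ U ∧ ⋃₀ (F : Set (Set X)) = Set.univ) :
    ∃ F : Finset (Set X), ↑F ⊆ U ∧ ⋃₀ (F : Set (Set X)) = Set.univ ∧ F.card = covN U := by
  obtain ⟨F, h1, h2⟩ := h
  exact Nat.sInf_mem (s := {n : ℕ | ∃ F : Finset (Set X), ↑F ⊆ U ∧
    ⋃₀ (F : Set (Set X)) = Set.univ ∧ F.card = n}) ⟨F.card, F, h1, h2, rfl⟩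

lemma one_le_covN [Nonempty X]
    (h : ∃ F : Finset (Set X), ↑F ⊆ U ∧ ⋃₀ (F : Set (Set X)) = Set.univ) : 1 ≤ covN U := by
  obtain ⟨F, -, h2, hc⟩ := covN_spec h
  rcases Nat.eq_zero_or_pos (covN U) with h0 | h1
  · exfalso
    rw [h0, Finset.card_eq_zero] at hc
    subst hc
    simp at h2
    exact (Set.univ_nonempty (α := X)).ne_empty h2.symm
  · exact h1

lemma exists_finite_subcover [CompactSpace X] (hU : ∀ s ∈ U, IsOpen s)
    (hc : ⋃₀ U = Set.univ) : ∃ F : Finset (Set X), ↑F ⊆ U ∧ ⋃₀ (F : Set (Set X)) = Set.univ := by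
  obtain ⟨b', hb'U, hfin, hcov⟩ := IsCompact.elim_finite_subcover_image (s := (Set.univ : Set X))
    (b := U) (c := id) isCompact_univ hU (by simp only [id]; rw [← Set.sUnion_eq_biUnion, hc])
  refine ⟨hfin.toFinset, by simpa using hb'U, ?_⟩
  apply Set.eq_univ_of_univ_subset
  rw [Set.sUnion_eq_biUnion]
  simp only [id] at hcov
  simpa using hcov

end Cov

lemma covTraj_zero {X : Type*} {U : Set (Set X)} (ψ : X → X) : covTraj ψ U 0 = U := rfl

lemma covTraj_succ {X : Type*} {U : Set (Set X)} (ψ : X → X) (n : ℕ) :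
    covTraj ψ U (n + 1) = Set.image2 (· ∩ ·) U ((fun s => ψ ⁻¹' s) '' covTraj ψ U n) := rfl

set_option linter.unusedSectionVars false
section Cov2
variable {X : Type*} [TopologicalSpace X] {U V : Set (Set X)}

lemma covN_le_of_refines (hV : ∃ F : Finset (Set X), ↑F ⊆ V ∧ ⋃₀ (F : Set (Set X)) = Set.univ)
    (h : ∀ v ∈ V, ∃ u ∈ U, v ⊆ u) : covN U ≤ covN V := by
  classical
  obtain ⟨F, hFV, hFc, hcard⟩ := covN_spec hV
  set f : Set X → Set X := fun v => if hv : ∃ u ∈ U, v ⊆ u then hv.choose else v with hf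
  have key : ∀ v ∈ F, f v ∈ U ∧ v ⊆ f v := by
    intro v hv
    have hx := h v (hFV hv)
    rw [hf]; simp only [dif_pos hx]
    exact ⟨hx.choose_spec.1, hx.choose_spec.2⟩
  have hsub : ↑(F.image f) ⊆ U := fun s hs => by
    simp only [Finset.coe_image, Set.mem_image, Finset.mem_coe] at hs
    obtain ⟨v, hv, rfl⟩ := hs; exact (key v hv).1
  have hcov : ⋃₀ ((F.image f : Finset (Set X)) : Set (Set X)) = Set.univ := by
    apply Set.eq_univ_of_univ_subset
    intro x _
    have hx : x ∈ ⋃₀ (F : Set (Set X)) := by rw [hFc]; trivial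
    obtain ⟨v, hv, hxv⟩ := hx
    exact ⟨f v, by simp only [Finset.coe_image]; exact ⟨v, hv, rfl⟩, (key v hv).2 hxv⟩
  calc covN U ≤ (F.image f).card := covN_le hsub hcov
    _ ≤ F.card := Finset.card_image_le
    _ = covN V := hcard

lemma covN_image2_le {A B : Set (Set X)}
    (hA : ∃ F : Finset (Set X), ↑F ⊆ A ∧ ⋃₀ (F : Set (Set X)) = Set.univ)
    (hB : ∃ F : Finset (Set X), ↑F ⊆ B ∧ ⋃₀ (F : Set (Set X)) = Set.univ) :
    covN (Set.image2 (· ∩ ·) A B) ≤ covN A * covN B := by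
  classical
  obtain ⟨F, hFA, hFc, hFcard⟩ := covN_spec hA
  obtain ⟨G, hGB, hGc, hGcard⟩ := covN_spec hB
  have hsub : ↑(Finset.image₂ (· ∩ ·) F G) ⊆ Set.image2 (· ∩ ·) A B := by
    rw [Finset.coe_image₂]; exact Set.image2_subset hFA hGB
  have hcov : ⋃₀ ((Finset.image₂ (· ∩ ·) F G : Finset (Set X)) : Set (Set X)) = Set.univ := by
    apply Set.eq_univ_of_univ_subset
    intro x _
    have hx : x ∈ ⋃₀ (F : Set (Set X)) := by rw [hFc]; trivial
    have hy : x ∈ ⋃₀ (G : Set (Set X)) := by rw [hGc]; trivial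
    obtain ⟨u, hu, hxu⟩ := hx
    obtain ⟨v, hv, hxv⟩ := hy
    exact ⟨u ∩ v, Finset.mem_coe.2 (Finset.mem_image₂.mpr ⟨u, hu, v, hv, rfl⟩), ⟨hxu, hxv⟩⟩
  calc covN (Set.image2 (· ∩ ·) A B) ≤ (Finset.image₂ (· ∩ ·) F G).card := covN_le hsub hcov
    _ ≤ F.card * G.card := Finset.card_image₂_le _ _ _
    _ = covN A * covN B := by rw [hFcard, hGcard]

lemma exists_subcover_image (f : X → X)
    (hV : ∃ F : Finset (Set X), ↑F ⊆ V ∧ ⋃₀ (F : Set (Set X)) = Set.univ) :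
    ∃ F : Finset (Set X), ↑F ⊆ (fun s => f ⁻¹' s) '' V ∧ ⋃₀ (F : Set (Set X)) = Set.univ := by
  classical
  obtain ⟨F, hFV, hFc⟩ := hV
  refine ⟨F.image (fun s => f ⁻¹' s), by rw [Finset.coe_image]; exact Set.image_mono hFV, ?_⟩
  apply Set.eq_univ_of_univ_subset
  intro x _
  have hx : f x ∈ ⋃₀ (F : Set (Set X)) := by rw [hFc]; trivial
  obtain ⟨v, hv, hfv⟩ := hx
  exact ⟨f ⁻¹' v, by simp only [Finset.coe_image]; exact ⟨v, hv, rfl⟩, hfv⟩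

lemma covN_preimage_le (f : X → X)
    (hV : ∃ F : Finset (Set X), ↑F ⊆ V ∧ ⋃₀ (F : Set (Set X)) = Set.univ) :
    covN ((fun s => f ⁻¹' s) '' V) ≤ covN V := by
  classical
  obtain ⟨F, hFV, hFc, hFcard⟩ := covN_spec hV
  have hsub : ↑(F.image (fun s => f ⁻¹' s)) ⊆ (fun s => f ⁻¹' s) '' V := by
    rw [Finset.coe_image]; exact Set.image_mono hFV
  have hcov : ⋃₀ ((F.image (fun s => f ⁻¹' s) : Finset (Set X)) : Set (Set X)) = Set.univ := by
    apply Set.eq_univ_of_univ_subset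
    intro x _
    have hx : f x ∈ ⋃₀ (F : Set (Set X)) := by rw [hFc]; trivial
    obtain ⟨v, hv, hfv⟩ := hx
    exact ⟨f ⁻¹' v, by simp only [Finset.coe_image]; exact ⟨v, hv, rfl⟩, hfv⟩
  calc covN _ ≤ (F.image (fun s => f ⁻¹' s)).card := covN_le hsub hcov
    _ ≤ F.card := Finset.card_image_le
    _ = covN V := hFcard

variable {ψ : X → X}

lemma covTraj_isOpen (hψ : Continuous ψ) (hU : ∀ s ∈ U, IsOpen s) (n : ℕ) :
    ∀ s ∈ covTraj ψ U n, IsOpen s := by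
  induction n with
  | zero => exact hU
  | succ n ih =>
    rintro s ⟨u, hu, t, ⟨t', ht', rfl⟩, rfl⟩
    exact (hU u hu).inter ((ih t' ht').preimage hψ)

lemma covTraj_sUnion (hc : ⋃₀ U = Set.univ) (n : ℕ) : ⋃₀ covTraj ψ U n = Set.univ := by
  induction n with
  | zero => exact hc
  | succ n ih =>
    apply Set.eq_univ_of_univ_subset
    intro x _
    have h1 : x ∈ ⋃₀ U := by rw [hc]; trivial
    have h2 : ψ x ∈ ⋃₀ covTraj ψ U n := by rw [ih]; trivial
    obtain ⟨u, hu, hxu⟩ := h1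
    obtain ⟨t, ht, hxt⟩ := h2
    exact ⟨u ∩ ψ ⁻¹' t, ⟨u, hu, ψ ⁻¹' t, ⟨t, ht, rfl⟩, rfl⟩, ⟨hxu, hxt⟩⟩

lemma covTraj_refines (h : ∀ v ∈ V, ∃ u ∈ U, v ⊆ u) (n : ℕ) :
    ∀ v ∈ covTraj ψ V n, ∃ u ∈ covTraj ψ U n, v ⊆ u := by
  induction n with
  | zero => exact h
  | succ n ih =>
    rintro s ⟨v, hv, t, ⟨t', ht', rfl⟩, rfl⟩
    obtain ⟨u, hu, hvu⟩ := h v hv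
    obtain ⟨w, hw, htw⟩ := ih t' ht'
    exact ⟨u ∩ ψ ⁻¹' w, ⟨u, hu, ψ ⁻¹' w, ⟨w, hw, rfl⟩, rfl⟩,
      Set.inter_subset_inter hvu (Set.preimage_mono htw)⟩

lemma covTraj_add (m n : ℕ) : covTraj ψ U (m + n + 1) =
    Set.image2 (· ∩ ·) (covTraj ψ U m) ((fun s => ψ^[m+1] ⁻¹' s) '' covTraj ψ U n) := by
  induction m with
  | zero =>
    rw [Nat.zero_add, covTraj_succ, covTraj_zero]
    simp
  | succ m ih =>
    have h1 : m + 1 + n + 1 = (m + n + 1) + 1 := by omega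
    rw [h1, covTraj_succ, ih,
      Set.image_image2_distrib (g₁ := fun s => ψ ⁻¹' s) (g₂ := fun s => ψ ⁻¹' s)
        (f' := (· ∩ ·)) (fun a b => Set.preimage_inter),
      ← Set.image2_assoc (fun a b c => Set.inter_assoc a b c),
      covTraj_succ]
    congr 1
    rw [← Set.image_comp]
    congr 1
end Cov2

lemma Htop_tendsto {X : Type*} [TopologicalSpace X] [CompactSpace X] [Nonempty X]
    {ψ : X → X} {U : Set (Set X)} (hψ : Continuous ψ)
    (hU : ∀ s ∈ U, IsOpen s) (hc : ⋃₀ U = Set.univ) :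
    Tendsto (fun n : ℕ => Real.log (covN (covTraj ψ U n)) / (n + 1)) atTop (𝓝 (Htop ψ U)) ∧
      0 ≤ Htop ψ U := by
  have hfin : ∀ k, ∃ F : Finset (Set X), ↑F ⊆ covTraj ψ U k ∧
      ⋃₀ (F : Set (Set X)) = Set.univ :=
    fun k => exists_finite_subcover (covTraj_isOpen hψ hU k) (covTraj_sUnion hc k)
  have hpos : ∀ k, 1 ≤ covN (covTraj ψ U k) := fun k => one_le_covN (hfin k)
  set u : ℕ → ℝ := fun n => match n with
    | 0 => 0
    | k+1 => Real.log (covN (covTraj ψ U k)) with hu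
  have hunn : ∀ n, 0 ≤ u n := by
    intro n
    match n with
    | 0 => exact le_refl 0
    | k+1 => exact Real.log_nonneg (by exact_mod_cast hpos k)
  have hsub : Subadditive u := by
    intro m n
    match m, n with
    | 0, n => simpa [hu] using le_refl (u n)
    | m+1, 0 => simpa [hu] using le_refl (u (m+1))
    | m+1, n+1 =>
      have he : m + 1 + (n + 1) = (m + n + 1) + 1 := by omega
      rw [he]
      show Real.log (covN (covTraj ψ U (m + n + 1))) ≤
        Real.log (covN (covTraj ψ U m)) + Real.log (covN (covTraj ψ U n))
      have h2 : covN (covTraj ψ U (m+n+1)) ≤ covN (covTraj ψ U m) * covN (covTraj ψ U n) := by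
        rw [covTraj_add]
        refine le_trans (covN_image2_le (hfin m) (exists_subcover_image _ (hfin n))) ?_
        exact Nat.mul_le_mul_left _ (covN_preimage_le _ (hfin n))
      calc Real.log (covN (covTraj ψ U (m+n+1)))
          ≤ Real.log ((covN (covTraj ψ U m) : ℝ) * (covN (covTraj ψ U n) : ℝ)) := by
            have hx : (0:ℝ) < (covN (covTraj ψ U (m+n+1)) : ℝ) := by
              exact_mod_cast Nat.lt_of_lt_of_le Nat.zero_lt_one (hpos (m+n+1))
            apply Real.log_le_log hx
            exact_mod_cast h2
        _ = Real.log (covN (covTraj ψ U m)) + Real.log (covN (covTraj ψ U n)) :=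
            Real.log_mul (by exact_mod_cast Nat.one_le_iff_ne_zero.mp (hpos m))
              (by exact_mod_cast Nat.one_le_iff_ne_zero.mp (hpos n))
  have hbdd : BddBelow (Set.range fun n : ℕ => u n / n) := by
    refine ⟨0, ?_⟩
    rintro x ⟨n, rfl⟩
    exact div_nonneg (hunn n) (Nat.cast_nonneg n)
  have htends := hsub.tendsto_lim hbdd
  have h2 := (tendsto_add_atTop_iff_nat 1).mpr htends
  have key : Tendsto (fun n : ℕ => Real.log (covN (covTraj ψ U n)) / (n + 1)) atTop
      (𝓝 hsub.lim) := by
    refine h2.congr fun n => ?_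
    show u (n+1) / ((n+1 : ℕ) : ℝ) = Real.log (covN (covTraj ψ U n)) / ((n : ℝ) + 1)
    push_cast
    rfl
  have hH : Htop ψ U = hsub.lim := key.limUnder_eq
  rw [hH]
  refine ⟨key, ge_of_tendsto' key fun n => ?_⟩
  exact div_nonneg (hunn (n+1)) (by positivity)

section Grp
variable {G : Type*} [AddCommGroup G]

lemma sub_helper {N : AddSubgroup G} {a b c : G} (h1 : a - c ∈ N) (h2 : b - c ∈ N) :
    a - b ∈ N := by
  have := sub_mem h1 h2; rwa [sub_sub_sub_cancel_right] at this

lemma sub_helper2 {N : AddSubgroup G} {a b c : G} (h1 : a - b ∈ N) (h2 : b - c ∈ N) :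
    a - c ∈ N := by
  have := add_mem h1 h2; rwa [sub_add_sub_cancel] at this

lemma mem_Bsub {φ : AddMonoid.End G} {N : AddSubgroup G} {n : ℕ} {x : G} :
    x ∈ Bsub φ N n ↔ ∀ i < n, (φ ^ i) x ∈ N := by
  simp only [Bsub, AddSubgroup.mem_iInf, AddSubgroup.mem_comap, Finset.mem_range]
  exact Iff.rfl

lemma Bsub_one (φ : AddMonoid.End G) (N : AddSubgroup G) : Bsub φ N 1 = N := by
  ext x
  simp only [mem_Bsub, Nat.lt_one_iff, forall_eq, pow_zero]
  exact ⟨fun h => h, fun h => h⟩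

lemma mem_Bsub_succ {φ : AddMonoid.End G} {N : AddSubgroup G} {n : ℕ} {x : G} :
    x ∈ Bsub φ N (n + 1) ↔ x ∈ N ∧ φ x ∈ Bsub φ N n := by
  simp only [mem_Bsub]
  constructor
  · intro h
    refine ⟨by simpa using h 0 n.succ_pos, fun i hi => ?_⟩
    have h2 := h (i + 1) (by omega)
    rw [pow_succ] at h2
    exact h2
  · rintro ⟨h0, h⟩ i hi
    match i with
    | 0 => simpa using h0
    | i + 1 =>
      have h2 := h i (by omega)
      rw [pow_succ]
      exact h2

lemma Bsub_finiteIndex (φ : AddMonoid.End G) {N : AddSubgroup G} (hN : N.FiniteIndex) (n : ℕ) :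
    (Bsub φ N n).FiniteIndex := by
  induction n with
  | zero =>
    have h : Bsub φ N 0 = ⊤ := by ext x; simp [mem_Bsub]
    rw [h]
    exact ⟨by simp [AddSubgroup.index_top]⟩
  | succ n ih =>
    have h : Bsub φ N (n+1) = N ⊓ (Bsub φ N n).comap (φ : AddMonoid.End G) := by
      ext x
      simp only [mem_Bsub_succ, AddSubgroup.mem_inf, AddSubgroup.mem_comap]
      exact Iff.rfl
    rw [h]
    have hcomap : ((Bsub φ N n).comap (φ : AddMonoid.End G)).FiniteIndex := by
      have hdvd : ((Bsub φ N n).comap (φ : AddMonoid.End G)).index ∣ (Bsub φ N n).index := by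
        refine (dvd_of_eq (AddSubgroup.index_comap (Bsub φ N n) (φ : G →+ G))).trans ?_
        exact AddSubgroup.relIndex_dvd_index_of_normal _ _
      exact ⟨fun h0 => ih.index_ne_zero (Nat.eq_zero_of_zero_dvd (h0 ▸ hdvd))⟩
    have := hcomap
    have := hN
    infer_instance

/-- The coset `x + N` as a set. -/
def coset (N : AddSubgroup G) (x : G) : Set G := {y | y - x ∈ N}

lemma mem_coset {N : AddSubgroup G} {x y : G} : y ∈ coset N x ↔ y - x ∈ N := Iff.rfl

lemma self_mem_coset {N : AddSubgroup G} {x : G} : x ∈ coset N x := by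
  simp only [coset, Set.mem_setOf_eq, sub_self]
  exact N.zero_mem

/-- The cover of `G` by all cosets of `N`. -/
def zeta (N : AddSubgroup G) : Set (Set G) := Set.range (coset N)

lemma coset_eq_coset {N : AddSubgroup G} {x y : G} (h : y - x ∈ N) :
    coset N x = coset N y := by
  ext z
  simp only [coset, Set.mem_setOf_eq]
  constructor
  · intro hz
    have := sub_mem hz h
    rwa [sub_sub_sub_cancel_right] at this
  · intro hz
    have := add_mem hz h
    rwa [sub_add_sub_cancel] at this

lemma coset_inter_eq {ψ : AddMonoid.End G} {N : AddSubgroup G} {n : ℕ} {x z w : G}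
    (hw1 : w - x ∈ N) (hw2 : ψ w - z ∈ Bsub ψ N (n+1)) :
    coset N x ∩ (⇑ψ) ⁻¹' coset (Bsub ψ N (n+1)) z = coset (Bsub ψ N (n+1+1)) w := by
  ext y
  simp only [Set.mem_inter_iff, Set.mem_preimage, mem_coset]
  constructor
  · rintro ⟨h1, h2⟩
    exact mem_Bsub_succ.mpr ⟨sub_helper h1 hw1, by rw [map_sub]; exact sub_helper h2 hw2⟩
  · intro h
    obtain ⟨h1, h2⟩ := mem_Bsub_succ.mp h
    rw [map_sub] at h2
    exact ⟨sub_helper2 h1 hw1, sub_helper2 h2 hw2⟩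

lemma covTraj_zeta (ψ : AddMonoid.End G) (N : AddSubgroup G) (n : ℕ) :
    (∀ s ∈ covTraj (⇑ψ) (zeta N) n, s = ∅ ∨ ∃ x, s = coset (Bsub ψ N (n+1)) x) ∧
    (∀ x, coset (Bsub ψ N (n+1)) x ∈ covTraj (⇑ψ) (zeta N) n) := by
  induction n with
  | zero =>
    rw [covTraj_zero]
    constructor
    · rintro s ⟨x, rfl⟩
      exact Or.inr ⟨x, by rw [Bsub_one]⟩
    · intro x
      rw [Bsub_one]
      exact ⟨x, rfl⟩
  | succ n ih =>
    rw [covTraj_succ]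
    constructor
    · rintro s ⟨u, ⟨x, rfl⟩, t, ⟨t', ht', rfl⟩, rfl⟩
      rcases ih.1 t' ht' with rfl | ⟨z, rfl⟩
      · left; simp
      · by_cases hs : coset N x ∩ (⇑ψ) ⁻¹' coset (Bsub ψ N (n+1)) z = ∅
        · left; exact hs
        · right
          obtain ⟨w, hw1, hw2⟩ := Set.nonempty_iff_ne_empty.mpr hs
          rw [Set.mem_preimage, mem_coset] at hw2
          rw [mem_coset] at hw1
          exact ⟨w, coset_inter_eq hw1 hw2⟩
    · intro x
      refine ⟨coset N x, ⟨x, rfl⟩, (⇑ψ) ⁻¹' coset (Bsub ψ N (n+1)) (ψ x),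
        ⟨_, ih.2 (ψ x), rfl⟩, ?_⟩
      exact coset_inter_eq (by rw [sub_self]; exact N.zero_mem)
        (by rw [sub_self]; exact (Bsub ψ N (n+1)).zero_mem)

lemma covN_partition [TopologicalSpace G] {B : AddSubgroup G} (hB : B.FiniteIndex)
    {S : Set (Set G)} (h1 : ∀ s ∈ S, s = ∅ ∨ ∃ x, s = coset B x)
    (h2 : ∀ x, coset B x ∈ S) : covN S = B.index := by
  classical
  have hfin : Finite (G ⧸ B) := B.finite_quotient_of_finiteIndex
  have hft : Fintype (G ⧸ B) := Fintype.ofFinite _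
  set F : Finset (Set G) := Finset.image (fun q : G ⧸ B => coset B q.out) Finset.univ with hF
  have hFS : ↑F ⊆ S := by
    intro s hs
    rw [hF] at hs
    simp only [Finset.coe_image, Set.mem_image, Finset.coe_univ, Set.mem_univ, true_and] at hs
    obtain ⟨q, _, rfl⟩ := hs
    exact h2 _
  have hmemcoset : ∀ y : G, y ∈ coset B (QuotientAddGroup.mk (s := B) y).out := by
    intro y
    have hq : QuotientAddGroup.mk (s := B) ((QuotientAddGroup.mk (s := B) y).out) =
        QuotientAddGroup.mk (s := B) y := Quotient.out_eq _
    rw [QuotientAddGroup.eq] at hq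
    rw [mem_coset, ← neg_add_eq_sub]
    exact hq
  have hFc : ⋃₀ (F : Set (Set G)) = Set.univ := by
    apply Set.eq_univ_of_univ_subset
    intro y _
    refine ⟨coset B (QuotientAddGroup.mk (s := B) y).out, ?_, hmemcoset y⟩
    rw [hF]
    simp only [Finset.coe_image, Set.mem_image, Finset.coe_univ, Set.mem_univ, true_and]
    exact ⟨_, rfl⟩
  have hle : covN S ≤ B.index := by
    refine le_trans (covN_le hFS hFc) (le_trans Finset.card_image_le ?_)
    simp [AddSubgroup.index_eq_card, Nat.card_eq_fintype_card]
  obtain ⟨F', hF'S, hF'c, hcard⟩ := covN_spec ⟨F, hFS, hFc⟩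
  have hq : ∀ q : G ⧸ B, ∃ s ∈ F', q.out ∈ s := by
    intro q
    have hx : q.out ∈ ⋃₀ (F' : Set (Set G)) := by rw [hF'c]; trivial
    obtain ⟨s, hs, hmem⟩ := hx
    exact ⟨s, hs, hmem⟩
  choose f hf1 hf2 using hq
  have hinj : Fintype.card (G ⧸ B) ≤ F'.card := by
    rw [← Finset.card_univ]
    apply Finset.card_le_card_of_injOn f (fun q _ => hf1 q)
    intro q _ q' _ hqq
    rcases h1 _ (hF'S (hf1 q)) with he | ⟨x, hx⟩
    · exact absurd (he ▸ hf2 q) (Set.notMem_empty _)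
    · have h2q : q.out - x ∈ B := by have := hf2 q; rw [hx, mem_coset] at this; exact this
      have h2q' : q'.out - x ∈ B := by
        have := hf2 q'; rw [← hqq, hx, mem_coset] at this; exact this
      have hsub : q.out - q'.out ∈ B := sub_helper h2q h2q'
      have : QuotientAddGroup.mk (s := B) q'.out = QuotientAddGroup.mk (s := B) q.out := by
        rw [QuotientAddGroup.eq, neg_add_eq_sub]
        exact hsub
      calc q = QuotientAddGroup.mk (s := B) q.out := (Quotient.out_eq q).symm
        _ = QuotientAddGroup.mk (s := B) q'.out := this.symm
        _ = q' := Quotient.out_eq q'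
  have hge : B.index ≤ covN S := by
    rw [AddSubgroup.index_eq_card, Nat.card_eq_fintype_card, ← hcard]
    exact hinj
  exact le_antisymm hle hge

end Grp

theorem myT2 {K : Type*} [AddCommGroup K] [TopologicalSpace K] [IsTopologicalAddGroup K]
    [TotallyDisconnectedSpace K] : T2Space K := by
  have : T1Space K := by
    refine ⟨fun x => ?_⟩
    have h : IsPreconnected (closure {x}) := isPreconnected_singleton.closure
    have hs : Set.Subsingleton (closure ({x} : Set K)) :=
      TotallyDisconnectedSpace.isTotallyDisconnected_univ _ (Set.subset_univ _) h
    have hx : x ∈ closure ({x} : Set K) := subset_closure rfl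
    have he : closure ({x} : Set K) = {x} :=
      Set.eq_singleton_iff_unique_mem.mpr ⟨hx, fun y hy => hs hy hx⟩
    rw [← he]; exact isClosed_closure
  infer_instance

section Main
variable {K : Type*} [AddCommGroup K] [TopologicalSpace K] [IsTopologicalAddGroup K]

lemma zeta_isOpen {N : AddSubgroup K} (hN : IsOpen (N : Set K)) :
    ∀ s ∈ zeta N, IsOpen s := by
  rintro s ⟨x, rfl⟩
  have h : coset N x = (fun y => y - x) ⁻¹' (N : Set K) := rfl
  rw [h]
  exact hN.preimage (continuous_sub_right x)

lemma zeta_cover (N : AddSubgroup K) : ⋃₀ zeta N = Set.univ := by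
  apply Set.eq_univ_of_univ_subset
  intro y _
  exact ⟨coset N y, ⟨y, rfl⟩, self_mem_coset⟩

lemma covN_covTraj_zeta (ψ : AddMonoid.End K) {N : AddSubgroup K} (hNf : N.FiniteIndex)
    (n : ℕ) : covN (covTraj (⇑ψ) (zeta N) n) = (Bsub ψ N (n+1)).index :=
  covN_partition (Bsub_finiteIndex ψ hNf (n+1)) (covTraj_zeta ψ N n).1 (covTraj_zeta ψ N n).2

lemma Hstar_eq [CompactSpace K] (ψ : AddMonoid.End K) (hψ : Continuous ψ)
    {N : AddSubgroup K} (hNo : IsOpen (N : Set K)) (hNf : N.FiniteIndex) :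
    Hstar ψ N = Htop (⇑ψ) (zeta N) := by
  have hne : Nonempty K := ⟨0⟩
  obtain ⟨key, -⟩ := Htop_tendsto hψ (zeta_isOpen hNo) (zeta_cover N)
  set g : ℕ → ℝ := fun n : ℕ => Real.log ((Bsub ψ N n).index) / (n : ℝ) with hg
  have key2 : Tendsto (fun n : ℕ => g (n + 1)) atTop (𝓝 (Htop (⇑ψ) (zeta N))) := by
    refine key.congr fun n => ?_
    rw [covN_covTraj_zeta ψ hNf n, hg]
    push_cast
    ring
  have key3 : Tendsto g atTop (𝓝 (Htop (⇑ψ) (zeta N))) :=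
    (tendsto_add_atTop_iff_nat 1).mp key2
  exact key3.limUnder_eq

lemma exists_refining_subgroup [CompactSpace K] [TotallyDisconnectedSpace K]
    {U : Set (Set K)} (hU : ∀ s ∈ U, IsOpen s) (hc : ⋃₀ U = Set.univ) :
    ∃ N : AddSubgroup K, IsOpen (N : Set K) ∧ N.FiniteIndex ∧
      ∀ x, ∃ u ∈ U, coset N x ⊆ u := by
  have : T2Space K := myT2
  have key : ∀ x : K, ∃ H : OpenAddSubgroup K, ∃ u ∈ U, coset H.toAddSubgroup x ⊆ u := by
    intro x
    have hx : x ∈ ⋃₀ U := by rw [hc]; trivial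
    obtain ⟨u, hu, hxu⟩ := hx
    obtain ⟨V, hV, hxV, hVu⟩ := compact_exists_isClopen_in_isOpen (hU u hu) hxu
    have hW : IsClopen ((fun y => y + x) ⁻¹' V) := hV.preimage (continuous_add_right x)
    have h0 : (0 : K) ∈ (fun y => y + x) ⁻¹' V := by simpa using hxV
    obtain ⟨H, hH⟩ := IsTopologicalAddGroup.exist_openAddSubgroup_sub_clopen_nhds_of_zero hW h0
    refine ⟨H, u, hu, fun y hy => ?_⟩
    have h2 := hH hy
    rw [Set.mem_preimage, sub_add_cancel] at h2
    exact hVu h2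
  choose H u hu hcov using key
  have hcover : (Set.univ : Set K) ⊆ ⋃ x : K, coset (H x).toAddSubgroup x :=
    fun y _ => Set.mem_iUnion.mpr ⟨y, self_mem_coset⟩
  obtain ⟨T, hT⟩ := isCompact_univ.elim_finite_subcover
    (fun x : K => coset (H x).toAddSubgroup x)
    (fun x => zeta_isOpen (H x).isOpen _ ⟨x, rfl⟩) hcover
  set N : AddSubgroup K := ⨅ x ∈ T, (H x).toAddSubgroup with hN
  have hNle : ∀ x ∈ T, N ≤ (H x).toAddSubgroup := fun x hx => iInf₂_le x hx
  have hNopen : IsOpen (N : Set K) := by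
    have hcoe : (N : Set K) = ⋂ x ∈ T, ((H x) : Set K) := by
      ext y
      simp only [hN, SetLike.mem_coe, AddSubgroup.mem_iInf, Set.mem_iInter]
      rfl
    rw [hcoe]
    exact isOpen_biInter_finset fun x _ => (H x).isOpen
  have hfinq : Finite (K ⧸ N) := AddSubgroup.quotient_finite_of_isOpen N hNopen
  have hNfin : N.FiniteIndex := AddSubgroup.finiteIndex_of_finite_quotient (H := N)
  refine ⟨N, hNopen, hNfin, fun y => ?_⟩
  have hy : y ∈ ⋃ x ∈ T, coset (H x).toAddSubgroup x := hT trivial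
  obtain ⟨x, hxT, hyx⟩ := Set.mem_iUnion₂.mp hy
  refine ⟨u x, hu x, fun z hz => ?_⟩
  apply hcov x
  rw [mem_coset] at hz hyx ⊢
  exact sub_helper2 (hNle x hxT hz) hyx
end Main


theorem stmt18 {K : Type*} [AddCommGroup K] [TopologicalSpace K] [IsTopologicalAddGroup K]
    [CompactSpace K] [TotallyDisconnectedSpace K]
    (ψ : AddMonoid.End K) (hψ : Continuous ψ) :
    entStar ‹TopologicalSpace K› ψ = htop (⇑ψ) := by
  have hne : Nonempty K := ⟨0⟩
  apply le_antisymm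
  · refine iSup_le fun N => iSup_le fun hN => ?_
    obtain ⟨hNo, hNf⟩ := hN
    rw [Hstar_eq ψ hψ hNo hNf]
    exact le_iSup_of_le (zeta N) (le_iSup_of_le ⟨zeta_isOpen hNo, zeta_cover N⟩ le_rfl)
  · refine iSup_le fun U => iSup_le fun hU => ?_
    obtain ⟨ho, hc⟩ := hU
    obtain ⟨N, hNo, hNf, href⟩ := exists_refining_subgroup ho hc
    have h1 := Htop_tendsto hψ ho hc
    have h2 := Htop_tendsto hψ (zeta_isOpen hNo) (zeta_cover N)
    have hle : Htop (⇑ψ) U ≤ Htop (⇑ψ) (zeta N) := by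
      refine le_of_tendsto_of_tendsto' h1.1 h2.1 fun n => ?_
      have hzfin : ∃ F : Finset (Set K), ↑F ⊆ covTraj (⇑ψ) (zeta N) n ∧
          ⋃₀ (F : Set (Set K)) = Set.univ :=
        exists_finite_subcover (covTraj_isOpen hψ (zeta_isOpen hNo) n)
          (covTraj_sUnion (zeta_cover N) n)
      have hUfin : ∃ F : Finset (Set K), ↑F ⊆ covTraj (⇑ψ) U n ∧
          ⋃₀ (F : Set (Set K)) = Set.univ :=
        exists_finite_subcover (covTraj_isOpen hψ ho n) (covTraj_sUnion hc n)
      have href' : ∀ v ∈ zeta N, ∃ u ∈ U, v ⊆ u := by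
        rintro v ⟨x, rfl⟩
        exact href x
      have hcle : covN (covTraj (⇑ψ) U n) ≤ covN (covTraj (⇑ψ) (zeta N) n) :=
        covN_le_of_refines hzfin (covTraj_refines href' n)
      have hpos : (0 : ℝ) < covN (covTraj (⇑ψ) U n) := by
        exact_mod_cast Nat.lt_of_lt_of_le Nat.zero_lt_one (one_le_covN hUfin)
      have hlog : Real.log (covN (covTraj (⇑ψ) U n)) ≤
          Real.log (covN (covTraj (⇑ψ) (zeta N) n)) :=
        Real.log_le_log hpos (by exact_mod_cast hcle)
      have hd : (0 : ℝ) < (n : ℝ) + 1 := by positivity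
      exact div_le_div_of_nonneg_right hlog hd.le
    refine le_iSup_of_le N (le_iSup_of_le ⟨hNo, hNf⟩ ?_)
    rw [Hstar_eq ψ hψ hNo hNf]
    exact ENNReal.ofReal_le_ofReal hle
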